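/- If A is an accretive n×n complex matrix, then det(Re A) ≤ |det A| (Ostrowski–Taussky inequality). -/

import Mathlib

open Matrix
open scoped ComplexOrder

noncomputable section
namespace Paper

variable {n : ℕ}

/-- Real part `(A + Aᴴ)/2`. -/
def re (A : Matrix (Fin n) (Fin n) ℂ) : Matrix (Fin n) (Fin n) ℂ := (2⁻¹ : ℂ) • (A + Aᴴ)

/-- Imaginary part `(A - Aᴴ)/(2i)`. -/
def im (A : Matrix (Fin n) (Fin n) ℂ) : Matrix (Fin n) (Fin n) ℂ :=
  (2 * Complex.I)⁻¹ • (A - Aᴴ)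

/-- The sector `S_α`. -/
def sector (α : ℝ) : Set ℂ := {z | 0 < z.re ∧ |z.im| ≤ z.re * Real.tan α}

/-- Numerical range of a matrix. -/
def numericalRange (A : Matrix (Fin n) (Fin n) ℂ) : Set ℂ :=
  {z | ∃ x : Fin n → ℂ, star x ⬝ᵥ x = 1 ∧ z = star x ⬝ᵥ (A *ᵥ x)}

/-- Loewner order: `X ≤ Y` iff `Y - X` is positive semidefinite. -/
def loewnerLE (X Y : Matrix (Fin n) (Fin n) ℂ) : Prop := (Y - X).PosSemidef

lemma re_isHermitian (A : Matrix (Fin n) (Fin n) ℂ) : (re A).IsHermitian := by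
  show ((2⁻¹ : ℂ) • (A + Aᴴ))ᴴ = (2⁻¹ : ℂ) • (A + Aᴴ)
  rw [Matrix.conjTranspose_smul, Matrix.conjTranspose_add,
    Matrix.conjTranspose_conjTranspose, add_comm Aᴴ A]
  simp

/-- The `j`-th largest element of `v` (descending sort). -/
def nthLargest (v : Fin n → ℝ) (j : Fin n) : ℝ :=
  ((List.ofFn v).mergeSort (fun a b => decide (b ≤ a))).get
    (Fin.cast (by simp) j)

/-- `j`-th largest eigenvalue of a Hermitian matrix. -/
def eigDesc {A : Matrix (Fin n) (Fin n) ℂ} (hA : A.IsHermitian) (j : Fin n) : ℝ :=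
  nthLargest hA.eigenvalues j

/-- `j`-th largest singular value. -/
def singular (A : Matrix (Fin n) (Fin n) ℂ) (j : Fin n) : ℝ :=
  nthLargest (fun i => Real.sqrt ((Matrix.isHermitian_conjTranspose_mul_self A).eigenvalues i)) j

/-- Square root of a positive semidefinite matrix (the former `Matrix.PosSemidef.sqrt`). -/
def psdSqrt {A : Matrix (Fin n) (Fin n) ℂ} (hA : A.PosSemidef) : Matrix (Fin n) (Fin n) ℂ :=
  (hA.1.eigenvectorUnitary : Matrix (Fin n) (Fin n) ℂ) *
    diagonal ((↑) ∘ (Real.sqrt ·) ∘ hA.1.eigenvalues) *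
    (star hA.1.eigenvectorUnitary : Matrix (Fin n) (Fin n) ℂ)

/-- Weighted geometric mean of positive definite matrices. -/
def sharp (v : ℝ) {A B : Matrix (Fin n) (Fin n) ℂ} (hA : A.PosDef) (hB : B.PosDef) :
    Matrix (Fin n) (Fin n) ℂ :=
  psdSqrt hA.posSemidef *
    (Matrix.isHermitian_mul_mul_conjTranspose (psdSqrt hA.posSemidef)⁻¹ hB.1).cfc
      (fun x => Real.rpow x v) * psdSqrt hA.posSemidef

/-- Weighted arithmetic mean. -/
def arith (v : ℝ) (A B : Matrix (Fin n) (Fin n) ℂ) : Matrix (Fin n) (Fin n) ℂ :=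
  (1 - v) • A + v • B

/-- Weighted harmonic mean. -/
def harm (v : ℝ) (A B : Matrix (Fin n) (Fin n) ℂ) : Matrix (Fin n) (Fin n) ℂ :=
  ((1 - v) • A⁻¹ + v • B⁻¹)⁻¹

/-- Kantorovich constant. -/
def K (h : ℝ) : ℝ := (h + 1) ^ 2 / (4 * h)

lemma psdSqrt_mul_self {A : Matrix (Fin n) (Fin n) ℂ} (hA : A.PosSemidef) :
    psdSqrt hA * psdSqrt hA = A := by
  unfold psdSqrt
  set U : Matrix (Fin n) (Fin n) ℂ := (hA.1.eigenvectorUnitary : Matrix (Fin n) (Fin n) ℂ)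
  set sU : Matrix (Fin n) (Fin n) ℂ := (star hA.1.eigenvectorUnitary : Matrix (Fin n) (Fin n) ℂ)
  set D : Matrix (Fin n) (Fin n) ℂ := diagonal ((↑) ∘ (Real.sqrt ·) ∘ hA.1.eigenvalues)
  have hU2 : sU * U = 1 := (Matrix.mem_unitaryGroup_iff').mp hA.1.eigenvectorUnitary.2
  have hD : D * D = diagonal (RCLike.ofReal ∘ hA.1.eigenvalues) := by
    rw [diagonal_mul_diagonal]
    congr 1
    funext i
    simp only [Function.comp_apply]
    rw [← Complex.ofReal_mul, Real.mul_self_sqrt (hA.eigenvalues_nonneg i)]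
    rfl
  conv_rhs => rw [hA.1.spectral_theorem, Unitary.conjStarAlgAut_apply]
  calc U * D * sU * (U * D * sU) = U * D * (sU * U) * D * sU := by simp only [mul_assoc]
    _ = U * (D * D) * sU := by rw [hU2, mul_one, mul_assoc U D D]
    _ = _ := by rw [hD]

lemma psdSqrt_isHermitian {A : Matrix (Fin n) (Fin n) ℂ} (hA : A.PosSemidef) :
    (psdSqrt hA).IsHermitian :=
  Matrix.isHermitian_mul_mul_conjTranspose _
    (isHermitian_diagonal_of_self_adjoint _ (by ext i; simp))

lemma aux_det {n : ℕ} (M : Matrix (Fin n) (Fin n) ℂ) (hM : M.IsHermitian) :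
    1 ≤ ‖(1 + Complex.I • M).det‖ := by
  classical
  set U : Matrix (Fin n) (Fin n) ℂ := (hM.eigenvectorUnitary : Matrix (Fin n) (Fin n) ℂ)
  have hU1 : U * star U = 1 := (Matrix.mem_unitaryGroup_iff).mp hM.eigenvectorUnitary.2
  have hU2 : star U * U = 1 := (Matrix.mem_unitaryGroup_iff').mp hM.eigenvectorUnitary.2
  have hfact : 1 + Complex.I • M
      = U * (1 + Complex.I • diagonal (RCLike.ofReal ∘ hM.eigenvalues)) * star U := by
    conv_lhs => rw [hM.spectral_theorem, Unitary.conjStarAlgAut_apply]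
    rw [Matrix.mul_add, Matrix.add_mul, Matrix.mul_one, hU1, Matrix.mul_smul,
      Matrix.smul_mul, mul_assoc]
  have hdiag : (1 : Matrix (Fin n) (Fin n) ℂ) + Complex.I • diagonal (RCLike.ofReal ∘ hM.eigenvalues)
      = diagonal (fun i => 1 + Complex.I * (hM.eigenvalues i : ℂ)) := by
    rw [← Matrix.diagonal_one, ← Matrix.diagonal_smul, ← Matrix.diagonal_add]
    rfl
  have hdet : (1 + Complex.I • M).det = ∏ i, (1 + Complex.I * (hM.eigenvalues i : ℂ)) := by
    rw [hfact, Matrix.det_mul, Matrix.det_mul, mul_comm, ← mul_assoc, ← Matrix.det_mul, hU2,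
      Matrix.det_one, one_mul, hdiag, Matrix.det_diagonal]
  rw [hdet, norm_prod]
  have hterm : ∀ i, (1:ℝ) ≤ ‖(1 + Complex.I * (hM.eigenvalues i : ℂ))‖ := by
    intro i
    have h1 : ((1 : ℂ) + Complex.I * (hM.eigenvalues i : ℂ)).re = 1 := by simp
    calc (1:ℝ) = |((1 : ℂ) + Complex.I * (hM.eigenvalues i : ℂ)).re| := by rw [h1]; simp
      _ ≤ _ := Complex.abs_re_le_norm _
  calc (1:ℝ) = ∏ _i : Fin n, 1 := by simp
    _ ≤ _ := Finset.prod_le_prod (fun i _ => zero_le_one) (fun i _ => hterm i)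

/-- Ostrowski–Taussky inequality. -/
theorem det_re_le_abs_det (A : Matrix (Fin n) (Fin n) ℂ) (hA : (re A).PosDef) :
    ((re A).det).re ≤ ‖A.det‖ := by
  classical
  set H := re A with hHdef
  set K := im A with hKdef
  have hKherm : K.IsHermitian := by
    show ((2 * Complex.I)⁻¹ • (A - Aᴴ))ᴴ = (2 * Complex.I)⁻¹ • (A - Aᴴ)
    rw [Matrix.conjTranspose_smul, Matrix.conjTranspose_sub,
      Matrix.conjTranspose_conjTranspose]
    have : star (2 * Complex.I)⁻¹ = -(2 * Complex.I)⁻¹ := by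
      simp [Complex.ext_iff]
    rw [this, neg_smul, ← smul_neg, neg_sub]
  have hdecomp : A = H + Complex.I • K := by
    have h1 : Complex.I • K = (2⁻¹ : ℂ) • (A - Aᴴ) := by
      rw [hKdef]
      show Complex.I • ((2 * Complex.I)⁻¹ • (A - Aᴴ)) = _
      rw [smul_smul]
      congr 1
      field_simp
    rw [h1, hHdef]
    show A = (2⁻¹ : ℂ) • (A + Aᴴ) + (2⁻¹ : ℂ) • (A - Aᴴ)
    rw [← smul_add, add_add_sub_cancel, ← two_smul ℂ A, smul_smul]
    norm_num
  -- square root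
  set S := psdSqrt hA.posSemidef with hSdef
  have hS2 : S * S = H := psdSqrt_mul_self hA.posSemidef
  have hSherm : S.IsHermitian := psdSqrt_isHermitian hA.posSemidef
  have hdetH : (0:ℂ) < H.det := hA.det_pos
  have hdetHre : 0 < H.det.re := (Complex.lt_def.mp hdetH).1
  have hdetHim : H.det.im = 0 := ((Complex.lt_def.mp hdetH).2).symm
  have hdetS : S.det ≠ 0 := by
    intro h
    have : H.det = 0 := by rw [← hS2, Matrix.det_mul, h, mul_zero]
    exact hdetH.ne' this
  have hSu : IsUnit S.det := hdetS.isUnit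
  have hSSi : S * S⁻¹ = 1 := Matrix.mul_nonsing_inv S hSu
  have hSiS : S⁻¹ * S = 1 := Matrix.nonsing_inv_mul S hSu
  set M := S⁻¹ * K * S⁻¹ with hMdef
  have hMherm : M.IsHermitian := by
    show Mᴴ = M
    rw [hMdef, Matrix.conjTranspose_mul, Matrix.conjTranspose_mul,
      Matrix.conjTranspose_nonsing_inv, hSherm.eq, hKherm.eq, mul_assoc]
  have hfact : A = S * (1 + Complex.I • M) * S := by
    rw [Matrix.mul_add, Matrix.add_mul, Matrix.mul_one, hS2, Matrix.mul_smul, Matrix.smul_mul]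
    have : S * M * S = K := by
      rw [hMdef, ← mul_assoc, ← mul_assoc, hSSi, one_mul, mul_assoc, hSiS, mul_one]
    rw [this, hdecomp]
  have hdetA : A.det = S.det * (1 + Complex.I • M).det * S.det := by
    rw [hfact, Matrix.det_mul, Matrix.det_mul]
  have habsH : ‖H.det‖ = H.det.re := by
    have : H.det = (H.det.re : ℂ) := Complex.ext rfl (by simp [hdetHim])
    rw [this]
    simp [abs_of_pos hdetHre]
  calc H.det.re = ‖H.det‖ := habsH.symm
    _ = ‖H.det‖ * 1 := (mul_one _).symm
    _ ≤ ‖H.det‖ * ‖(1 + Complex.I • M).det‖ := by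
        exact mul_le_mul_of_nonneg_left (aux_det M hMherm) (norm_nonneg _)
    _ = ‖A.det‖ := by
        have : ‖S.det‖ * ‖S.det‖ = ‖H.det‖ := by
          rw [← norm_mul, ← Matrix.det_mul, hS2]
        rw [hdetA, norm_mul, norm_mul]
        rw [← this]
        ring


end Paper
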